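/- Let C = diag(c₂₃, c₁₃, c₁₂) with c₁₂, c₁₃, c₂₃ > 0, k ∈ ℝ, f_crit = (c₁₃k)²/c₂₃ − 4π²c₁₂/L² > 0, and define Q(w) = ∫₀ᴸ ⟨C w′, w′⟩ − c₁₃k (w₁ w₃′ − w₁′ w₃) + f_crit (w₂² + w₃²) dt for w ∈ C¹ functions [0,L] → ℝ³ with w(0) = w(L) = 0. Then Q(w) ≥ 0 for all such w, and Q(w*) = 0 for w*(t) = ( (c₁₃kL)/(2c₂₃π)(1 − cos(2πt/L)), 0, −sin(2πt/L) ). -/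

import Mathlib

open Real Set intervalIntegral MeasureTheory


lemma ftc_interior {a b : ℝ} (hab : a ≤ b) (F F' : ℝ → ℝ)
    (hC : ContinuousOn F (Icc a b))
    (hF : ∀ t ∈ Ioo a b, HasDerivAt F (F' t) t)
    (hF' : ContinuousOn F' (Icc a b)) :
    ∫ t in a..b, F' t = F b - F a := by
  refine integral_eq_sub_of_hasDeriv_right_of_le hab hC
    (fun x hx => (hF x hx).hasDerivWithinAt) ?_
  exact (hF'.mono (by rw [uIcc_of_le hab])).intervalIntegrable

set_option maxHeartbeats 1000000 in
lemma wirtinger_dirichlet {l : ℝ} (hl : 0 < l) (u u' : ℝ → ℝ)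
    (hcu : ContinuousOn u (Icc 0 l))
    (hu : ∀ t ∈ Ioo 0 l, HasDerivAt u (u' t) t)
    (hu' : ContinuousOn u' (Icc 0 l))
    (h0 : u 0 = 0) (hl0 : u l = 0) :
    (π / l)^2 * ∫ t in (0:ℝ)..l, (u t)^2 ≤ ∫ t in (0:ℝ)..l, (u' t)^2 := by
  set c : ℝ := π / l with hc
  have hcpos : 0 < c := div_pos pi_pos hl
  have hcl : c * l = π := by rw [hc]; exact div_mul_cancel₀ π hl.ne'
  obtain ⟨M, hM⟩ := isCompact_Icc.exists_bound_of_continuousOn hu'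
  have hM0 : 0 ≤ M := le_trans (norm_nonneg _) (hM 0 ⟨le_rfl, hl.le⟩)
  -- endpoint smallness of u
  have hua : ∀ ε : ℝ, 0 < ε → ε ≤ l → |u ε| ≤ M * ε := by
    intro ε hε hεl
    obtain ⟨x, hx, hslope⟩ := exists_hasDerivAt_eq_slope u u' hε
      (hcu.mono (Icc_subset_Icc le_rfl hεl))
      (fun x hx => hu x ⟨hx.1, lt_of_lt_of_le hx.2 hεl⟩)
    have : u ε = u' x * ε := by
      rw [hslope, h0, sub_zero, sub_zero]; field_simp
    rw [this, abs_mul, abs_of_pos hε]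
    have := hM x ⟨hx.1.le, le_trans hx.2.le hεl⟩
    rw [Real.norm_eq_abs] at this
    exact mul_le_mul_of_nonneg_right this hε.le
  have hub : ∀ ε : ℝ, 0 < ε → ε ≤ l → |u (l - ε)| ≤ M * ε := by
    intro ε hε hεl
    rcases eq_or_lt_of_le hεl with rfl | hεl'
    · simp only [sub_self, h0, abs_zero]; positivity
    obtain ⟨x, hx, hslope⟩ := exists_hasDerivAt_eq_slope u u' (show l - ε < l by linarith)
      (hcu.mono (Icc_subset_Icc (by linarith) le_rfl))
      (fun x hx => hu x ⟨by linarith [hx.1], hx.2⟩)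
    have : u (l - ε) = -(u' x) * ε := by
      have h2 : u l - u (l - ε) = u' x * ε := by
        rw [hslope, show l - (l - ε) = ε by ring]; field_simp
      rw [hl0] at h2; linarith
    rw [this, abs_mul, abs_neg, abs_of_pos hε]
    have := hM x ⟨by linarith [hx.1], hx.2.le⟩
    rw [Real.norm_eq_abs] at this
    exact mul_le_mul_of_nonneg_right this hε.le
  set h : ℝ → ℝ := fun t => u' t ^ 2 - c ^ 2 * u t ^ 2 with hh
  have hch : ContinuousOn h (Icc 0 l) :=
    (hu'.pow 2).sub (continuousOn_const.mul (hcu.pow 2))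
  obtain ⟨K, hK⟩ := isCompact_Icc.exists_bound_of_continuousOn hch
  have hK0 : 0 ≤ K := le_trans (norm_nonneg _) (hK 0 ⟨le_rfl, hl.le⟩)
  have key : ∀ ε : ℝ, 0 < ε → ε < l/2 → -((2*M^2 + 2*K) * ε) ≤ ∫ t in (0:ℝ)..l, h t := by
    intro ε hε hε2
    have hεl : ε ≤ l - ε := by linarith
    have hsub1 : Icc ε (l-ε) ⊆ Icc 0 l := Icc_subset_Icc (by linarith) (by linarith)
    have hsin : ∀ t ∈ Icc ε (l-ε), 0 < Real.sin (c*t) := by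
      intro t ht
      apply Real.sin_pos_of_pos_of_lt_pi
      · exact mul_pos hcpos (lt_of_lt_of_le hε ht.1)
      · have h1 : c * t < c * l := by
          apply mul_lt_mul_of_pos_left _ hcpos
          linarith [ht.2]
        rw [hcl] at h1; exact h1
    set q : ℝ → ℝ := fun t => Real.cos (c*t) / Real.sin (c*t) with hq
    set Fd : ℝ → ℝ := fun t => (-c * (1 + q t^2)) * u t^2 + 2 * q t * u t * u' t with hFd
    set F : ℝ → ℝ := fun t => q t * u t^2 with hF
    have hderiv : ∀ t ∈ Icc ε (l-ε), HasDerivAt F (Fd t) t := by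
      intro t ht
      have hst := hsin t ht
      have hsne : Real.sin (c*t) ≠ 0 := ne_of_gt hst
      have hut : HasDerivAt u (u' t) t :=
        hu t ⟨lt_of_lt_of_le hε ht.1, lt_of_le_of_lt ht.2 (by linarith)⟩
      have hlin : HasDerivAt (fun x : ℝ => c * x) c t := by
        simpa using (hasDerivAt_id t).const_mul c
      have hcos : HasDerivAt (fun x : ℝ => Real.cos (c*x)) (-Real.sin (c*t) * c) t :=
        (Real.hasDerivAt_cos (c*t)).comp t hlin
      have hsin' : HasDerivAt (fun x : ℝ => Real.sin (c*x)) (Real.cos (c*t) * c) t :=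
        (Real.hasDerivAt_sin (c*t)).comp t hlin
      have hq2 : 1 + q t ^ 2 = 1 / Real.sin (c*t) ^ 2 := by
        rw [hq]
        field_simp
        exact Real.sin_sq_add_cos_sq _
      have hqt : HasDerivAt q (-c * (1 + q t ^ 2)) t := by
        have hd := hcos.div hsin' hsne
        have e1 : -Real.sin (c*t) * c * Real.sin (c*t) - Real.cos (c*t) * (Real.cos (c*t) * c)
            = -c := by linear_combination (-c) * Real.sin_sq_add_cos_sq (c*t)
        refine hd.congr_deriv ?_
        rw [hq2, e1]
        ring
      have := hqt.mul (hut.pow 2)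
      refine this.congr_deriv ?_
      simp only [hFd, Pi.pow_apply]
      ring
    have hcontq : ContinuousOn q (Icc ε (l-ε)) := by
      apply ContinuousOn.div
      · exact (Real.continuous_cos.comp (continuous_const.mul continuous_id)).continuousOn
      · exact (Real.continuous_sin.comp (continuous_const.mul continuous_id)).continuousOn
      · exact fun t ht => (hsin t ht).ne'
    have hcuε : ContinuousOn u (Icc ε (l-ε)) := hcu.mono hsub1
    have hu'ε : ContinuousOn u' (Icc ε (l-ε)) := hu'.mono hsub1
    have hcontFd : ContinuousOn Fd (Icc ε (l-ε)) := by
      apply ContinuousOn.add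
      · exact (continuousOn_const.mul (continuousOn_const.add (hcontq.pow 2))).mul (hcuε.pow 2)
      · exact ((continuousOn_const.mul hcontq).mul hcuε).mul hu'ε
    have hFTC : ∫ t in ε..(l-ε), Fd t = F (l-ε) - F ε := by
      apply integral_eq_sub_of_hasDerivAt
      · intro t ht; rw [uIcc_of_le hεl] at ht; exact hderiv t ht
      · exact (hcontFd.mono (by rw [uIcc_of_le hεl])).intervalIntegrable
    have hsqInt : IntervalIntegrable (fun t => (u' t - c * q t * u t)^2) volume ε (l-ε) := by
      apply ContinuousOn.intervalIntegrable
      rw [uIcc_of_le hεl]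
      exact (hu'ε.sub ((continuousOn_const.mul hcontq).mul hcuε)).pow 2
    have hFdInt : IntervalIntegrable (fun t => c * Fd t) volume ε (l-ε) := by
      apply ContinuousOn.intervalIntegrable
      rw [uIcc_of_le hεl]
      exact continuousOn_const.mul hcontFd
    have hmid : ∫ t in ε..(l-ε), h t
        = (∫ t in ε..(l-ε), (u' t - c * q t * u t)^2) + c * (F (l-ε) - F ε) := by
      rw [← hFTC, ← intervalIntegral.integral_const_mul, ← integral_add hsqInt hFdInt]
      apply integral_congr
      intro t ht
      simp only [hh, hFd]
      ring
    have hsq : 0 ≤ ∫ t in ε..(l-ε), (u' t - c * q t * u t)^2 :=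
      integral_nonneg hεl (fun t ht => sq_nonneg _)
    -- cot bound
    have hcε1 : 0 < c * ε := mul_pos hcpos hε
    have hcε2 : c * ε < π / 2 := by
      have : c * ε < c * (l/2) := mul_lt_mul_of_pos_left hε2 hcpos
      nlinarith [hcl]
    have hcosε : 0 < Real.cos (c*ε) := Real.cos_pos_of_mem_Ioo ⟨by linarith, hcε2⟩
    have hsinε : 0 < Real.sin (c*ε) := Real.sin_pos_of_pos_of_lt_pi hcε1 (by linarith [pi_pos])
    have htan := Real.lt_tan hcε1 hcε2
    rw [Real.tan_eq_sin_div_cos] at htan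
    have h5 : c * ε * Real.cos (c*ε) < Real.sin (c*ε) := by
      have := (lt_div_iff₀ hcosε).mp htan
      linarith
    have hcot : (c*ε) * (Real.cos (c*ε) / Real.sin (c*ε)) ≤ 1 := by
      have e : (c*ε) * (Real.cos (c*ε) / Real.sin (c*ε))
          = (c*ε*Real.cos (c*ε))/Real.sin (c*ε) := by ring
      rw [e, div_le_one hsinε]; linarith
    have hcotpos : 0 ≤ Real.cos (c*ε) / Real.sin (c*ε) := div_nonneg hcosε.le hsinε.le
    have hqend : q (l-ε) = - (Real.cos (c*ε) / Real.sin (c*ε)) := by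
      have harg : c * (l-ε) = π - c*ε := by rw [mul_sub, hcl]
      simp only [hq, harg, Real.cos_pi_sub, Real.sin_pi_sub, neg_div]
    have hqε : q ε = Real.cos (c*ε) / Real.sin (c*ε) := rfl
    -- bounds on F at the ends
    have hu2a : u ε ^ 2 ≤ (M*ε)^2 := by
      have := hua ε hε (by linarith)
      nlinarith [abs_nonneg (u ε), sq_abs (u ε)]
    have hu2b : u (l-ε) ^ 2 ≤ (M*ε)^2 := by
      have := hub ε hε (by linarith)
      nlinarith [abs_nonneg (u (l-ε)), sq_abs (u (l-ε))]
    have hFa : c * F ε ≤ M^2 * ε := by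
      have s1 : c * (Real.cos (c*ε) / Real.sin (c*ε)) * u ε^2
          ≤ c * (Real.cos (c*ε) / Real.sin (c*ε)) * (M*ε)^2 :=
        mul_le_mul_of_nonneg_left hu2a (mul_nonneg hcpos.le hcotpos)
      have s2 : ((c*ε) * (Real.cos (c*ε) / Real.sin (c*ε))) * (M^2*ε) ≤ 1 * (M^2*ε) :=
        mul_le_mul_of_nonneg_right hcot (by positivity)
      have e1 : c * (Real.cos (c*ε) / Real.sin (c*ε)) * (M*ε)^2
          = ((c*ε) * (Real.cos (c*ε) / Real.sin (c*ε))) * (M^2*ε) := by ring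
      have e2 : c * F ε = c * (Real.cos (c*ε) / Real.sin (c*ε)) * u ε^2 := by
        simp only [hF, hqε]; ring
      rw [e2]; rw [e1] at s1; linarith
    have hFb : -(M^2 * ε) ≤ c * F (l-ε) := by
      have s1 : c * (Real.cos (c*ε) / Real.sin (c*ε)) * u (l-ε)^2
          ≤ c * (Real.cos (c*ε) / Real.sin (c*ε)) * (M*ε)^2 :=
        mul_le_mul_of_nonneg_left hu2b (mul_nonneg hcpos.le hcotpos)
      have s2 : ((c*ε) * (Real.cos (c*ε) / Real.sin (c*ε))) * (M^2*ε) ≤ 1 * (M^2*ε) :=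
        mul_le_mul_of_nonneg_right hcot (by positivity)
      have e1 : c * (Real.cos (c*ε) / Real.sin (c*ε)) * (M*ε)^2
          = ((c*ε) * (Real.cos (c*ε) / Real.sin (c*ε))) * (M^2*ε) := by ring
      have e2 : c * F (l-ε) = -(c * (Real.cos (c*ε) / Real.sin (c*ε)) * u (l-ε)^2) := by
        simp only [hF, hqend]; ring
      rw [e2]; rw [e1] at s1; linarith
    have hmid2 : -(2*(M^2) * ε) ≤ ∫ t in ε..(l-ε), h t := by
      rw [hmid]
      have : -(M^2*ε) - (M^2*ε) ≤ c * (F (l-ε) - F ε) := by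
        rw [mul_sub]; linarith
      linarith
    -- tails
    have hintsub : ∀ p r : ℝ, p ∈ Icc (0:ℝ) l → r ∈ Icc (0:ℝ) l →
        IntervalIntegrable h volume p r := by
      intro p r hp hr
      apply ContinuousOn.intervalIntegrable
      apply hch.mono
      rw [← uIcc_of_le hl.le]
      exact uIcc_subset_uIcc (by rwa [uIcc_of_le hl.le]) (by rwa [uIcc_of_le hl.le])
    have ht1 : |∫ t in (0:ℝ)..ε, h t| ≤ K * ε := by
      have := intervalIntegral.norm_integral_le_of_norm_le_const (C := K) (f := h)
        (a := 0) (b := ε) ?_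
      · rw [Real.norm_eq_abs] at this
        calc |∫ t in (0:ℝ)..ε, h t| ≤ K * |ε - 0| := this
          _ = K * ε := by rw [abs_of_pos (by linarith : (0:ℝ) < ε - 0)]; ring_nf
      · intro x hx
        rw [uIoc_of_le hε.le] at hx
        exact hK x ⟨hx.1.le, by linarith [hx.2]⟩
    have ht2 : |∫ t in (l-ε)..l, h t| ≤ K * ε := by
      have := intervalIntegral.norm_integral_le_of_norm_le_const (C := K) (f := h)
        (a := l-ε) (b := l) ?_
      · rw [Real.norm_eq_abs] at this
        calc |∫ t in (l-ε)..l, h t| ≤ K * |l - (l-ε)| := this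
          _ = K * ε := by rw [show l - (l-ε) = ε by ring, abs_of_pos hε]
      · intro x hx
        rw [uIoc_of_le (by linarith : l - ε ≤ l)] at hx
        exact hK x ⟨by linarith [hx.1], hx.2⟩
    have hsplit : ∫ t in (0:ℝ)..l, h t
        = (∫ t in (0:ℝ)..ε, h t) + (∫ t in ε..(l-ε), h t) + (∫ t in (l-ε)..l, h t) := by
      have e1 : (∫ t in (0:ℝ)..ε, h t) + (∫ t in ε..(l-ε), h t) = ∫ t in (0:ℝ)..(l-ε), h t :=
        integral_add_adjacent_intervals (hintsub 0 ε ⟨le_rfl, hl.le⟩ ⟨hε.le, by linarith⟩)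
          (hintsub ε (l-ε) ⟨hε.le, by linarith⟩ ⟨by linarith, by linarith⟩)
      have e2 : (∫ t in (0:ℝ)..(l-ε), h t) + (∫ t in (l-ε)..l, h t) = ∫ t in (0:ℝ)..l, h t :=
        integral_add_adjacent_intervals
          (hintsub 0 (l-ε) ⟨le_rfl, hl.le⟩ ⟨by linarith, by linarith⟩)
          (hintsub (l-ε) l ⟨by linarith, by linarith⟩ ⟨hl.le, le_rfl⟩)
      linarith
    rw [hsplit]
    have := abs_le.mp ht1
    have := abs_le.mp ht2
    nlinarith [hmid2]
  -- conclude nonnegativity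
  have hnn : 0 ≤ ∫ t in (0:ℝ)..l, h t := by
    by_contra hcon
    push_neg at hcon
    set I := ∫ t in (0:ℝ)..l, h t with hI
    set ε : ℝ := min (l/4) (-I/(2*M^2+2*K+2)) with hε
    have hd : 0 < 2*M^2+2*K+2 := by positivity
    have hε1 : 0 < ε := lt_min (by linarith) (div_pos (by linarith) hd)
    have hε2 : ε < l/2 := lt_of_le_of_lt (min_le_left _ _) (by linarith)
    have hkey := key ε hε1 hε2
    have hεle : ε ≤ -I/(2*M^2+2*K+2) := min_le_right _ _
    have h4 : ε * (2*M^2+2*K+2) ≤ -I := (le_div_iff₀ hd).mp hεle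
    nlinarith
  -- split h integral
  have hi1 : IntervalIntegrable (fun t => u' t ^2) volume 0 l := by
    apply ContinuousOn.intervalIntegrable; rw [uIcc_of_le hl.le]; exact hu'.pow 2
  have hi2 : IntervalIntegrable (fun t => c^2 * u t ^2) volume 0 l := by
    apply ContinuousOn.intervalIntegrable; rw [uIcc_of_le hl.le]
    exact continuousOn_const.mul (hcu.pow 2)
  have hsplit2 : ∫ t in (0:ℝ)..l, h t
      = (∫ t in (0:ℝ)..l, u' t ^2) - ∫ t in (0:ℝ)..l, c^2 * u t ^2 :=
    integral_sub hi1 hi2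
  rw [hsplit2, intervalIntegral.integral_const_mul] at hnn
  linarith

set_option maxHeartbeats 1000000 in
lemma poincare_zero_mean {l : ℝ} (hl : 0 < l) (g g' : ℝ → ℝ)
    (hcg : ContinuousOn g (Icc 0 l))
    (hg : ∀ t ∈ Ioo 0 l, HasDerivAt g (g' t) t)
    (hg' : ContinuousOn g' (Icc 0 l))
    (hmean : ∫ t in (0:ℝ)..l, g t = 0) :
    (π / l)^2 * ∫ t in (0:ℝ)..l, (g t)^2 ≤ ∫ t in (0:ℝ)..l, (g' t)^2 := by
  set c : ℝ := π / l with hc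
  have hcpos : 0 < c := div_pos pi_pos hl
  set G : ℝ → ℝ := fun x => ∫ t in (0:ℝ)..x, g t with hGdef
  have hcG : ContinuousOn G (Icc 0 l) := by
    have h1 : IntegrableOn g (uIcc (0:ℝ) l) volume := by
      rw [uIcc_of_le hl.le]; exact hcg.integrableOn_Icc
    have := continuousOn_primitive_interval (a := 0) (b := l) (μ := volume) h1
    rwa [uIcc_of_le hl.le] at this
  have hGd : ∀ t ∈ Ioo (0:ℝ) l, HasDerivAt G (g t) t := by
    intro t ht
    apply integral_hasDerivAt_right
    · apply ContinuousOn.intervalIntegrable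
      exact hcg.mono (by rw [uIcc_of_le ht.1.le]; exact Icc_subset_Icc le_rfl ht.2.le)
    · exact (hcg.mono Ioo_subset_Icc_self).stronglyMeasurableAtFilter isOpen_Ioo t ht
    · exact hcg.continuousAt (Icc_mem_nhds ht.1 ht.2)
  have hG0 : G 0 = 0 := integral_same
  have hGl : G l = 0 := hmean
  -- integration by parts : ∫ (g' G + g g) = 0
  have hIBP : (∫ t in (0:ℝ)..l, (g' t * G t + g t * g t)) = 0 := by
    have := ftc_interior hl.le (fun t => g t * G t) (fun t => g' t * G t + g t * g t)
      (hcg.mul hcG) ?_ ?_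
    · rw [this]; simp [hGl, hG0]
    · intro t ht
      have := (hg t ht).mul (hGd t ht)
      exact this
    · exact (hg'.mul hcG).add (hcg.mul hcg)
  -- integrability basics
  have int_g2 : IntervalIntegrable (fun t => g t ^ 2) volume 0 l := by
    apply ContinuousOn.intervalIntegrable; rw [uIcc_of_le hl.le]; exact hcg.pow 2
  have int_g'G : IntervalIntegrable (fun t => g' t * G t) volume 0 l := by
    apply ContinuousOn.intervalIntegrable; rw [uIcc_of_le hl.le]; exact hg'.mul hcG
  have int_g'2 : IntervalIntegrable (fun t => g' t ^ 2) volume 0 l := by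
    apply ContinuousOn.intervalIntegrable; rw [uIcc_of_le hl.le]; exact hg'.pow 2
  have int_G2 : IntervalIntegrable (fun t => G t ^ 2) volume 0 l := by
    apply ContinuousOn.intervalIntegrable; rw [uIcc_of_le hl.le]; exact hcG.pow 2
  set X : ℝ := ∫ t in (0:ℝ)..l, g t ^ 2 with hX
  set A : ℝ := ∫ t in (0:ℝ)..l, g' t ^ 2 with hA
  set B : ℝ := ∫ t in (0:ℝ)..l, G t ^ 2 with hB
  set C : ℝ := ∫ t in (0:ℝ)..l, g' t * G t with hC
  have hXnn : 0 ≤ X := integral_nonneg hl.le (fun t _ => sq_nonneg _)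
  have hAnn : 0 ≤ A := integral_nonneg hl.le (fun t _ => sq_nonneg _)
  have hCX : C + X = 0 := by
    have e0 : (∫ t in (0:ℝ)..l, (g' t * G t + g t * g t))
        = ∫ t in (0:ℝ)..l, (g' t * G t + g t ^ 2) := by
      apply integral_congr; intro t _; ring
    have e1 : (∫ t in (0:ℝ)..l, (g' t * G t + g t ^ 2)) = C + X := by
      rw [hC, hX]; exact integral_add int_g'G int_g2
    rw [e0, e1] at hIBP; exact hIBP
  -- Cauchy-Schwarz via discriminant
  have hquad : ∀ x : ℝ, 0 ≤ A * (x * x) + (2*C) * x + B := by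
    intro x
    have hnn : 0 ≤ ∫ t in (0:ℝ)..l, (x * g' t + G t)^2 :=
      integral_nonneg hl.le (fun t _ => sq_nonneg _)
    have hexp : (∫ t in (0:ℝ)..l, (x * g' t + G t)^2)
        = x^2 * A + 2*x*C + B := by
      rw [hA, hC, hB, ← intervalIntegral.integral_const_mul, ← intervalIntegral.integral_const_mul,
        ← integral_add ((int_g'2.const_mul _)) ((int_g'G.const_mul _)),
        ← integral_add (((int_g'2.const_mul _)).add ((int_g'G.const_mul _))) int_G2]
      apply integral_congr
      intro t ht; ring
    rw [hexp] at hnn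
    nlinarith [hnn]
  have hCS : C^2 ≤ A * B := by
    have := discrim_le_zero hquad
    rw [discrim] at this
    nlinarith
  -- Wirtinger for G
  have hWG : c^2 * B ≤ X := by
    have := wirtinger_dirichlet hl G g hcG hGd hcg hG0 hGl
    rw [← hc, ← hB, ← hX] at this
    nlinarith [sq_nonneg c]
  -- combine
  show c^2 * X ≤ A
  rcases eq_or_lt_of_le hXnn with hX0 | hXpos
  · rw [← hX0]; simpa using hAnn
  · have hXC : X = -C := by linarith
    have h1 : c^2 * X^2 ≤ A * X := by
      calc c^2 * X^2 = c^2 * C^2 := by rw [hXC]; ring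
        _ ≤ c^2 * (A*B) := by nlinarith [sq_nonneg c]
        _ = A * (c^2 * B) := by ring
        _ ≤ A * X := mul_le_mul_of_nonneg_left hWG hAnn
    nlinarith [hXpos]

set_option maxHeartbeats 1000000 in
lemma wirtinger_periodic {L : ℝ} (hL : 0 < L) (v v' : ℝ → ℝ)
    (hcv : ContinuousOn v (Icc 0 L))
    (hv : ∀ t ∈ Ioo 0 L, HasDerivAt v (v' t) t)
    (hv' : ContinuousOn v' (Icc 0 L))
    (hper : v 0 = v L) (hmean : ∫ t in (0:ℝ)..L, v t = 0) :
    (2*π/L)^2 * ∫ t in (0:ℝ)..L, (v t)^2 ≤ ∫ t in (0:ℝ)..L, (v' t)^2 := by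
  set l : ℝ := L/2 with hldef
  have hl : 0 < l := by rw [hldef]; linarith
  have hmaps : MapsTo (fun x : ℝ => L - x) (Icc 0 l) (Icc 0 L) := by
    intro x hx
    have h1 : 0 ≤ x := hx.1
    have h2 : x ≤ L/2 := by have := hx.2; rwa [hldef] at this
    simp only [mem_Icc]
    constructor <;> linarith
  have hreflC : ∀ f : ℝ → ℝ, ContinuousOn f (Icc 0 L) →
      ContinuousOn (fun x => f (L - x)) (Icc 0 l) := by
    intro f hf
    exact hf.comp ((continuous_const.sub continuous_id).continuousOn) hmaps
  have hrefl : ∀ t ∈ Ioo (0:ℝ) l, HasDerivAt (fun x => v (L - x)) (-(v' (L-t))) t := by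
    intro t ht
    have hin : L - t ∈ Ioo (0:ℝ) L := by
      constructor
      · have := ht.2; simp only [hldef] at this; linarith
      · linarith [ht.1]
    have hinner : HasDerivAt (fun x : ℝ => L - x) (-1) t := by
      exact ((hasDerivAt_const t L).sub (hasDerivAt_id t)).congr_deriv (by norm_num)
    have := (hv (L-t) hin).comp t hinner
    exact this.congr_deriv (by ring)
  -- the symmetric/antisymmetric parts
  set uu : ℝ → ℝ := fun t => v t - v (L - t) with huu
  set uud : ℝ → ℝ := fun t => v' t + v' (L - t) with huud
  set gg : ℝ → ℝ := fun t => v t + v (L - t) with hgg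
  set ggd : ℝ → ℝ := fun t => v' t - v' (L - t) with hggd
  have hsubIoo : Ioo (0:ℝ) l ⊆ Ioo 0 L := Ioo_subset_Ioo le_rfl (by simp [hldef]; linarith)
  have hcuu : ContinuousOn uu (Icc 0 l) :=
    (hcv.mono (Icc_subset_Icc le_rfl (by simp [hldef]; linarith))).sub (hreflC v hcv)
  have hcuud : ContinuousOn uud (Icc 0 l) :=
    (hv'.mono (Icc_subset_Icc le_rfl (by simp [hldef]; linarith))).add (hreflC v' hv')
  have hcgg : ContinuousOn gg (Icc 0 l) :=
    (hcv.mono (Icc_subset_Icc le_rfl (by simp [hldef]; linarith))).add (hreflC v hcv)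
  have hcggd : ContinuousOn ggd (Icc 0 l) :=
    (hv'.mono (Icc_subset_Icc le_rfl (by simp [hldef]; linarith))).sub (hreflC v' hv')
  have hduu : ∀ t ∈ Ioo (0:ℝ) l, HasDerivAt uu (uud t) t := by
    intro t ht
    have e : v' t - -v' (L - t) = uud t := by simp only [huud]; ring
    rw [← e]
    exact (hv t (hsubIoo ht)).sub (hrefl t ht)
  have hdgg : ∀ t ∈ Ioo (0:ℝ) l, HasDerivAt gg (ggd t) t := by
    intro t ht
    have e : v' t + -v' (L - t) = ggd t := by simp only [hggd]; ring
    rw [← e]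
    exact (hv t (hsubIoo ht)).add (hrefl t ht)
  have huu0 : uu 0 = 0 := by simp only [huu, sub_zero, hper]; ring
  have huul : uu l = 0 := by
    simp only [huu]
    rw [show L - l = l by rw [hldef]; ring]
    ring
  -- integrability helper
  have hInt : ∀ f : ℝ → ℝ, ContinuousOn f (Icc 0 L) → ∀ p r : ℝ, p ∈ Icc (0:ℝ) L →
      r ∈ Icc (0:ℝ) L → IntervalIntegrable f volume p r := by
    intro f hf p r hp hr
    apply ContinuousOn.intervalIntegrable
    apply hf.mono
    rw [← uIcc_of_le hL.le]
    exact uIcc_subset_uIcc (by rwa [uIcc_of_le hL.le]) (by rwa [uIcc_of_le hL.le])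
  have hl_mem : l ∈ Icc (0:ℝ) L := ⟨hl.le, by rw [hldef]; linarith⟩
  have h0_mem : (0:ℝ) ∈ Icc (0:ℝ) L := ⟨le_rfl, hL.le⟩
  have hL_mem : L ∈ Icc (0:ℝ) L := ⟨hL.le, le_rfl⟩
  have intl : ∀ f : ℝ → ℝ, ContinuousOn f (Icc 0 l) → IntervalIntegrable f volume 0 l := by
    intro f hf
    apply ContinuousOn.intervalIntegrable
    rwa [uIcc_of_le hl.le]
  -- mean of gg is zero
  have hLl : L - l = l := by rw [hldef]; ring
  have hmean_gg : ∫ t in (0:ℝ)..l, gg t = 0 := by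
    have e0 : ∫ t in (0:ℝ)..l, gg t
        = (∫ t in (0:ℝ)..l, v t) + ∫ t in (0:ℝ)..l, v (L - t) := by
      rw [hgg]
      exact integral_add (intl v (hcv.mono (Icc_subset_Icc le_rfl hl_mem.2)))
        (intl _ (hreflC v hcv))
    have e1 : ∫ t in (0:ℝ)..l, v (L - t) = ∫ t in l..L, v t := by
      have := integral_comp_sub_left (a := (0:ℝ)) (b := l) (fun s => v s) L
      rwa [hLl, sub_zero] at this
    have e2 : (∫ t in (0:ℝ)..l, v t) + (∫ t in l..L, v t) = ∫ t in (0:ℝ)..L, v t :=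
      integral_add_adjacent_intervals (hInt v hcv 0 l h0_mem hl_mem)
        (hInt v hcv l L hl_mem hL_mem)
    rw [e0, e1]
    rw [hmean] at e2
    exact e2
  -- splitting squares
  have hsplitf : ∀ f : ℝ → ℝ, ContinuousOn f (Icc 0 L) →
      (∫ t in (0:ℝ)..l, (f t)^2) + (∫ t in (0:ℝ)..l, (f (L-t))^2)
        = ∫ t in (0:ℝ)..L, (f t)^2 := by
    intro f hf
    have e1 : ∫ t in (0:ℝ)..l, (f (L-t))^2 = ∫ t in l..L, (f t)^2 := by
      have := integral_comp_sub_left (a := (0:ℝ)) (b := l) (fun s => (f s)^2) L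
      rwa [hLl, sub_zero] at this
    rw [e1]
    exact integral_add_adjacent_intervals (hInt _ (hf.pow 2) 0 l h0_mem hl_mem)
      (hInt _ (hf.pow 2) l L hl_mem hL_mem)
  have hsv := hsplitf v hcv
  have hsv' := hsplitf v' hv'
  -- apply the two inequalities
  have hA := wirtinger_dirichlet hl uu uud hcuu hduu hcuud huu0 huul
  have hB := poincare_zero_mean hl gg ggd hcgg hdgg hcggd hmean_gg
  have E1 : (∫ t in (0:ℝ)..l, (uu t)^2) + (∫ t in (0:ℝ)..l, (gg t)^2)
      = 2 * ∫ t in (0:ℝ)..L, (v t)^2 := by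
    have q1 : (∫ t in (0:ℝ)..l, (uu t)^2) + (∫ t in (0:ℝ)..l, (gg t)^2)
        = ∫ t in (0:ℝ)..l, ((uu t)^2 + (gg t)^2) :=
      (integral_add (intl _ (hcuu.pow 2)) (intl _ (hcgg.pow 2))).symm
    have q2 : ∫ t in (0:ℝ)..l, ((uu t)^2 + (gg t)^2)
        = ∫ t in (0:ℝ)..l, (2*(v t)^2 + 2*(v (L-t))^2) := by
      apply integral_congr
      intro t _
      simp only [huu, hgg]; ring
    have q3 : ∫ t in (0:ℝ)..l, (2*(v t)^2 + 2*(v (L-t))^2)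
        = 2*(∫ t in (0:ℝ)..l, (v t)^2) + 2*(∫ t in (0:ℝ)..l, (v (L-t))^2) := by
      rw [integral_add ((intl (fun t => v t ^ 2) ((hcv.mono (Icc_subset_Icc le_rfl hl_mem.2)).pow 2)).const_mul 2)
        ((intl (fun t => v (L - t) ^ 2) ((hreflC v hcv).pow 2)).const_mul 2), intervalIntegral.integral_const_mul, intervalIntegral.integral_const_mul]
    rw [q1, q2, q3]
    linarith [hsv]
  have E2 : (∫ t in (0:ℝ)..l, (uud t)^2) + (∫ t in (0:ℝ)..l, (ggd t)^2)
      = 2 * ∫ t in (0:ℝ)..L, (v' t)^2 := by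
    have q1 : (∫ t in (0:ℝ)..l, (uud t)^2) + (∫ t in (0:ℝ)..l, (ggd t)^2)
        = ∫ t in (0:ℝ)..l, ((uud t)^2 + (ggd t)^2) :=
      (integral_add (intl _ (hcuud.pow 2)) (intl _ (hcggd.pow 2))).symm
    have q2 : ∫ t in (0:ℝ)..l, ((uud t)^2 + (ggd t)^2)
        = ∫ t in (0:ℝ)..l, (2*(v' t)^2 + 2*(v' (L-t))^2) := by
      apply integral_congr
      intro t _
      simp only [huud, hggd]; ring
    have q3 : ∫ t in (0:ℝ)..l, (2*(v' t)^2 + 2*(v' (L-t))^2)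
        = 2*(∫ t in (0:ℝ)..l, (v' t)^2) + 2*(∫ t in (0:ℝ)..l, (v' (L-t))^2) := by
      rw [integral_add ((intl (fun t => v' t ^ 2) ((hv'.mono (Icc_subset_Icc le_rfl hl_mem.2)).pow 2)).const_mul 2)
        ((intl (fun t => v' (L - t) ^ 2) ((hreflC v' hv').pow 2)).const_mul 2), intervalIntegral.integral_const_mul, intervalIntegral.integral_const_mul]
    rw [q1, q2, q3]
    linarith [hsv']
  have hsum := add_le_add hA hB
  rw [← mul_add, E1, E2] at hsum
  have hcc : (2*π/L)^2 = (π/l)^2 := by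
    rw [hldef]
    field_simp
  rw [hcc]
  linarith

set_option maxHeartbeats 2000000 in
theorem second_variation_nonneg_at_fcrit
    (c₁₂ c₁₃ c₂₃ k L : ℝ) (h12 : 0 < c₁₂) (h13 : 0 < c₁₃) (h23 : 0 < c₂₃)
    (hL : 0 < L)
    (fcrit : ℝ) (hf : fcrit = (c₁₃ * k)^2 / c₂₃ - 4 * π^2 * c₁₂ / L^2)
    (hfpos : 0 < fcrit) :
    (∀ w₁ w₂ w₃ w₁' w₂' w₃' : ℝ → ℝ,
      (∀ t ∈ Set.Icc (0:ℝ) L, HasDerivWithinAt w₁ (w₁' t) (Set.Icc 0 L) t) →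
      (∀ t ∈ Set.Icc (0:ℝ) L, HasDerivWithinAt w₂ (w₂' t) (Set.Icc 0 L) t) →
      (∀ t ∈ Set.Icc (0:ℝ) L, HasDerivWithinAt w₃ (w₃' t) (Set.Icc 0 L) t) →
      ContinuousOn w₁' (Set.Icc 0 L) → ContinuousOn w₂' (Set.Icc 0 L) →
      ContinuousOn w₃' (Set.Icc 0 L) →
      w₁ 0 = 0 → w₂ 0 = 0 → w₃ 0 = 0 → w₁ L = 0 → w₂ L = 0 → w₃ L = 0 →
      0 ≤ ∫ t in (0:ℝ)..L,
        (c₂₃ * (w₁' t)^2 + c₁₃ * (w₂' t)^2 + c₁₂ * (w₃' t)^2)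
          - c₁₃ * k * (w₁ t * w₃' t - w₁' t * w₃ t)
          + fcrit * ((w₂ t)^2 + (w₃ t)^2)) ∧
    (∀ w₁ w₃ : ℝ → ℝ,
      w₁ = (fun t => (c₁₃ * k * L) / (2 * c₂₃ * π) * (1 - cos (2 * π * t / L))) →
      w₃ = (fun t => -sin (2 * π * t / L)) →
      (∫ t in (0:ℝ)..L,
        (c₂₃ * (deriv w₁ t)^2 + c₁₂ * (deriv w₃ t)^2)
          - c₁₃ * k * (w₁ t * deriv w₃ t - deriv w₁ t * w₃ t)
          + fcrit * (w₃ t)^2) = 0) := by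
  constructor
  · -- Part 1 : nonnegativity
    intro w₁ w₂ w₃ w₁' w₂' w₃' h1 h2 h3 hc1 hc2 hc3 b10 b20 b30 b1L b2L b3L
    have hw1C : ContinuousOn w₁ (Icc 0 L) := fun t ht => (h1 t ht).continuousWithinAt
    have hw2C : ContinuousOn w₂ (Icc 0 L) := fun t ht => (h2 t ht).continuousWithinAt
    have hw3C : ContinuousOn w₃ (Icc 0 L) := fun t ht => (h3 t ht).continuousWithinAt
    have hd1 : ∀ t ∈ Ioo (0:ℝ) L, HasDerivAt w₁ (w₁' t) t := fun t ht =>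
      (h1 t ⟨ht.1.le, ht.2.le⟩).hasDerivAt (Icc_mem_nhds ht.1 ht.2)
    have hd2 : ∀ t ∈ Ioo (0:ℝ) L, HasDerivAt w₂ (w₂' t) t := fun t ht =>
      (h2 t ⟨ht.1.le, ht.2.le⟩).hasDerivAt (Icc_mem_nhds ht.1 ht.2)
    have hd3 : ∀ t ∈ Ioo (0:ℝ) L, HasDerivAt w₃ (w₃' t) t := fun t ht =>
      (h3 t ⟨ht.1.le, ht.2.le⟩).hasDerivAt (Icc_mem_nhds ht.1 ht.2)
    have intL : ∀ f : ℝ → ℝ, ContinuousOn f (Icc 0 L) → IntervalIntegrable f volume 0 L := by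
      intro f hfc
      apply ContinuousOn.intervalIntegrable
      rwa [uIcc_of_le hL.le]
    set a : ℝ := c₁₃ * k / c₂₃ with ha
    set m : ℝ := ∫ t in (0:ℝ)..L, w₃ t with hm
    set g : ℝ → ℝ := fun t => w₁' t + a * w₃ t with hg
    have hgC : ContinuousOn g (Icc 0 L) := hc1.add (continuousOn_const.mul hw3C)
    set S : ℝ := ∫ t in (0:ℝ)..L, (g t)^2 with hS
    set I2 : ℝ := ∫ t in (0:ℝ)..L, (w₂' t)^2 with hI2
    set I3 : ℝ := ∫ t in (0:ℝ)..L, (w₃' t)^2 with hI3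
    set K2 : ℝ := ∫ t in (0:ℝ)..L, (w₂ t)^2 with hK2
    set K3 : ℝ := ∫ t in (0:ℝ)..L, (w₃ t)^2 with hK3
    -- integration by parts
    have hprod : ∫ t in (0:ℝ)..L, (w₁' t * w₃ t + w₁ t * w₃' t) = 0 := by
      have := ftc_interior hL.le (fun t => w₁ t * w₃ t)
        (fun t => w₁' t * w₃ t + w₁ t * w₃' t) (hw1C.mul hw3C)
        (fun t ht => (hd1 t ht).mul (hd3 t ht))
        ((hc1.mul hw3C).add (hw1C.mul hc3))
      rw [this]
      simp [b10, b1L]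
    -- the big integral equals a sum of five pieces
    have hbig : (∫ t in (0:ℝ)..L,
        ((c₂₃ * (w₁' t)^2 + c₁₃ * (w₂' t)^2 + c₁₂ * (w₃' t)^2)
          - c₁₃ * k * (w₁ t * w₃' t - w₁' t * w₃ t)
          + fcrit * ((w₂ t)^2 + (w₃ t)^2)))
        = c₂₃ * S + (c₁₃ * I2 + (c₁₂ * I3 + (fcrit * K2
            + ((fcrit - c₂₃ * a^2) * K3 + (-(c₁₃*k)) *
              (∫ t in (0:ℝ)..L, (w₁' t * w₃ t + w₁ t * w₃' t)))))) := by
      have i1 : IntervalIntegrable (fun t => c₂₃ * (g t)^2) volume 0 L :=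
        intL _ (continuousOn_const.mul (hgC.pow 2))
      have i2 : IntervalIntegrable (fun t => c₁₃ * (w₂' t)^2) volume 0 L :=
        intL _ (continuousOn_const.mul (hc2.pow 2))
      have i3 : IntervalIntegrable (fun t => c₁₂ * (w₃' t)^2) volume 0 L :=
        intL _ (continuousOn_const.mul (hc3.pow 2))
      have i4 : IntervalIntegrable (fun t => fcrit * (w₂ t)^2) volume 0 L :=
        intL _ (continuousOn_const.mul (hw2C.pow 2))
      have i5 : IntervalIntegrable (fun t => (fcrit - c₂₃ * a^2) * (w₃ t)^2) volume 0 L :=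
        intL _ (continuousOn_const.mul (hw3C.pow 2))
      have i6 : IntervalIntegrable (fun t => (-(c₁₃*k)) * (w₁' t * w₃ t + w₁ t * w₃' t))
          volume 0 L :=
        intL _ (continuousOn_const.mul ((hc1.mul hw3C).add (hw1C.mul hc3)))
      have e0 : (∫ t in (0:ℝ)..L,
          ((c₂₃ * (w₁' t)^2 + c₁₃ * (w₂' t)^2 + c₁₂ * (w₃' t)^2)
            - c₁₃ * k * (w₁ t * w₃' t - w₁' t * w₃ t)
            + fcrit * ((w₂ t)^2 + (w₃ t)^2)))
          = ∫ t in (0:ℝ)..L, (c₂₃ * (g t)^2 + (c₁₃ * (w₂' t)^2 + (c₁₂ * (w₃' t)^2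
            + (fcrit * (w₂ t)^2 + ((fcrit - c₂₃ * a^2) * (w₃ t)^2
            + (-(c₁₃*k)) * (w₁' t * w₃ t + w₁ t * w₃' t)))))) := by
        apply integral_congr
        intro t _
        simp only [hg, ha]
        field_simp
        ring
      rw [e0, integral_add i1 (i2.add (i3.add (i4.add (i5.add i6)))),
        integral_add i2 (i3.add (i4.add (i5.add i6))),
        integral_add i3 (i4.add (i5.add i6)),
        integral_add i4 (i5.add i6),
        integral_add i5 i6,
        intervalIntegral.integral_const_mul, intervalIntegral.integral_const_mul, intervalIntegral.integral_const_mul, intervalIntegral.integral_const_mul,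
        intervalIntegral.integral_const_mul, intervalIntegral.integral_const_mul]
    rw [hbig, hprod]
    -- mean of g
    have hw1int : ∫ t in (0:ℝ)..L, w₁' t = 0 := by
      have := ftc_interior hL.le w₁ w₁' hw1C hd1 hc1
      rw [this, b10, b1L]; ring
    have hgmean : ∫ t in (0:ℝ)..L, g t = a * m := by
      rw [hg]
      rw [integral_add (intL _ hc1) (intL (fun t => a * w₃ t) (continuousOn_const.mul hw3C)),
        intervalIntegral.integral_const_mul, hw1int, ← hm]
      ring
    -- Cauchy-Schwarz-type bound : S ≥ (a m)^2 / L
    have hSbound : a^2 * m^2 / L ≤ S := by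
      set d : ℝ := a * m / L with hd
      have hnn : 0 ≤ ∫ t in (0:ℝ)..L, (g t - d)^2 :=
        integral_nonneg hL.le (fun t _ => sq_nonneg _)
      have hexp : (∫ t in (0:ℝ)..L, (g t - d)^2)
          = S - 2*d*(a*m) + d^2 * L := by
        have e1 : (∫ t in (0:ℝ)..L, (g t - d)^2)
            = ∫ t in (0:ℝ)..L, ((g t)^2 - (2*d) * g t + d^2) := by
          apply integral_congr; intro t _; ring
        rw [e1, integral_add (((intL (fun t => g t ^ 2) (hgC.pow 2))).sub ((intL _ hgC).const_mul (2*d)))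
            intervalIntegrable_const,
          integral_sub (intL (fun t => g t ^ 2) (hgC.pow 2)) ((intL _ hgC).const_mul (2*d)),
          intervalIntegral.integral_const_mul, hgmean, intervalIntegral.integral_const, ← hS]
        simp only [smul_eq_mul, sub_zero]
        ring
      rw [hexp] at hnn
      have : d^2 * L = a^2*m^2/L := by rw [hd]; field_simp
      rw [this] at hnn
      have : 2*d*(a*m) = 2*(a^2*m^2/L) := by rw [hd]; field_simp
      rw [this] at hnn
      linarith
    -- Wirtinger for w₃
    have hWirt : (2*π/L)^2 * (K3 - m^2/L) ≤ I3 := by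
      set v : ℝ → ℝ := fun t => w₃ t - m / L with hv
      have hcv : ContinuousOn v (Icc 0 L) := hw3C.sub continuousOn_const
      have hdv : ∀ t ∈ Ioo (0:ℝ) L, HasDerivAt v (w₃' t) t := fun t ht =>
        (hd3 t ht).sub_const (m/L)
      have hper : v 0 = v L := by simp [hv, b30, b3L]
      have hmean : ∫ t in (0:ℝ)..L, v t = 0 := by
        rw [hv]
        rw [integral_sub (intL _ hw3C) intervalIntegrable_const, intervalIntegral.integral_const, ← hm]
        simp only [smul_eq_mul, sub_zero]
        field_simp
        ring
      have := wirtinger_periodic hL v w₃' hcv hdv hc3 hper hmean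
      have hv2 : (∫ t in (0:ℝ)..L, (v t)^2) = K3 - m^2/L := by
        have e1 : (∫ t in (0:ℝ)..L, (v t)^2)
            = ∫ t in (0:ℝ)..L, ((w₃ t)^2 - (2*(m/L)) * w₃ t + (m/L)^2) := by
          apply integral_congr; intro t _; simp only [hv]; ring
        rw [e1, integral_add (((intL (fun t => w₃ t ^ 2) (hw3C.pow 2))).sub ((intL _ hw3C).const_mul _))
            intervalIntegrable_const,
          integral_sub (intL (fun t => w₃ t ^ 2) (hw3C.pow 2)) ((intL _ hw3C).const_mul _),
          intervalIntegral.integral_const_mul, ← hm, ← hK3, intervalIntegral.integral_const]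
        simp only [smul_eq_mul, sub_zero]
        field_simp
        ring
      rw [hv2] at this
      rw [hI3]
      exact this
    -- final arithmetic
    have hK3nn : 0 ≤ K3 := integral_nonneg hL.le (fun t _ => sq_nonneg _)
    have hI2nn : 0 ≤ I2 := integral_nonneg hL.le (fun t _ => sq_nonneg _)
    have hK2nn : 0 ≤ K2 := integral_nonneg hL.le (fun t _ => sq_nonneg _)
    have hiden : c₂₃ * a^2 = fcrit + c₁₂ * (2*π/L)^2 := by
      rw [hf, ha]
      field_simp
      ring
    have hmnn : 0 ≤ m^2 / L := div_nonneg (sq_nonneg m) hL.le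
    have t1 : c₂₃ * (a^2*m^2/L) ≤ c₂₃ * S := mul_le_mul_of_nonneg_left hSbound h23.le
    have t2 : c₁₂ * ((2*π/L)^2 * (K3 - m^2/L)) ≤ c₁₂ * I3 :=
      mul_le_mul_of_nonneg_left hWirt h12.le
    have t3 : c₂₃ * (a^2*m^2/L) = fcrit * (m^2/L) + c₁₂ * (2*π/L)^2 * (m^2/L) := by
      have : c₂₃ * (a^2*m^2/L) = (c₂₃ * a^2) * (m^2/L) := by ring
      rw [this, hiden]; ring
    have t4 : (fcrit - c₂₃*a^2) * K3 = -(c₁₂ * (2*π/L)^2) * K3 := by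
      rw [hiden]; ring
    have t5 : 0 ≤ fcrit * (m^2/L) := mul_nonneg hfpos.le hmnn
    have e5 : c₂₃*S + (c₁₃*I2 + (c₁₂*I3 + (fcrit*K2 + ((fcrit - c₂₃*a^2)*K3 + (-(c₁₃*k))*0))))
        = (c₂₃*S - c₂₃*(a^2*m^2/L)) + c₁₃*I2 + fcrit*K2
          + (c₁₂*I3 - c₁₂*((2*π/L)^2 * (K3 - m^2/L))) + fcrit*(m^2/L) := by
      linear_combination (-(K3 - m^2/L)) * hiden
    rw [e5]
    have q1 : 0 ≤ c₂₃*S - c₂₃*(a^2*m^2/L) := by linarith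
    have q2 : 0 ≤ c₁₂*I3 - c₁₂*((2*π/L)^2 * (K3 - m^2/L)) := by linarith
    have q3 : 0 ≤ c₁₃*I2 := mul_nonneg h13.le hI2nn
    have q4 : 0 ≤ fcrit*K2 := mul_nonneg hfpos.le hK2nn
    linarith
  · -- Part 2 : equality at the critical mode
    intro w₁ w₃ hw1 hw3
    subst hw1 hw3
    have hθ : ∀ t : ℝ, HasDerivAt (fun t : ℝ => 2*π*t/L) (2*π/L) t := by
      intro t
      simpa using ((hasDerivAt_id t).const_mul (2*π)).div_const L
    have hd1 : ∀ t : ℝ, HasDerivAt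
        (fun t => (c₁₃ * k * L) / (2 * c₂₃ * π) * (1 - Real.cos (2*π*t/L)))
        ((c₁₃ * k * L) / (2 * c₂₃ * π) * (Real.sin (2*π*t/L) * (2*π/L))) t := by
      intro t
      have h1 : HasDerivAt (fun t : ℝ => 1 - Real.cos (2*π*t/L))
          (Real.sin (2*π*t/L) * (2*π/L)) t := by
        have h2 := (Real.hasDerivAt_cos (2*π*t/L)).comp t (hθ t)
        have h3 := h2.const_sub 1
        exact h3.congr_deriv (by ring)
      exact h1.const_mul _
    have hd3 : ∀ t : ℝ, HasDerivAt (fun t : ℝ => -Real.sin (2*π*t/L))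
        (-(Real.cos (2*π*t/L) * (2*π/L))) t := by
      intro t
      exact ((Real.hasDerivAt_sin (2*π*t/L)).comp t (hθ t)).neg
    have hder1 : deriv (fun t => (c₁₃ * k * L) / (2 * c₂₃ * π) * (1 - Real.cos (2*π*t/L)))
        = fun t => (c₁₃ * k * L) / (2 * c₂₃ * π) * (Real.sin (2*π*t/L) * (2*π/L)) :=
      funext fun t => (hd1 t).deriv
    have hder3 : deriv (fun t : ℝ => -Real.sin (2*π*t/L))
        = fun t => -(Real.cos (2*π*t/L) * (2*π/L)) :=
      funext fun t => (hd3 t).deriv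
    rw [hder1, hder3]
    -- now an explicit trig integral
    set C₁ : ℝ := (c₁₃*k)^2/c₂₃ * (L/(2*π)) with hC₁
    set C₂ : ℝ := -fcrit * (L/(4*π)) with hC₂
    have hΦ : ∀ t : ℝ, HasDerivAt
        (fun t => C₁ * Real.sin (2*π*t/L) + C₂ * Real.sin (2*(2*π*t/L)))
        ((c₂₃ * ((c₁₃ * k * L) / (2 * c₂₃ * π) * (Real.sin (2*π*t/L) * (2*π/L)))^2
          + c₁₂ * (-(Real.cos (2*π*t/L) * (2*π/L)))^2)
          - c₁₃ * k * (((c₁₃ * k * L) / (2 * c₂₃ * π) * (1 - Real.cos (2*π*t/L)))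
              * (-(Real.cos (2*π*t/L) * (2*π/L)))
            - ((c₁₃ * k * L) / (2 * c₂₃ * π) * (Real.sin (2*π*t/L) * (2*π/L)))
              * (-Real.sin (2*π*t/L)))
          + fcrit * (-Real.sin (2*π*t/L))^2) t := by
      intro t
      have s1 := ((Real.hasDerivAt_sin (2*π*t/L)).comp t (hθ t)).const_mul C₁
      have hin2 : HasDerivAt (fun t : ℝ => 2*(2*π*t/L)) (2*(2*π/L)) t := (hθ t).const_mul 2
      have s2 := ((Real.hasDerivAt_sin (2*(2*π*t/L))).comp t hin2).const_mul C₂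
      have hsum := s1.add s2
      refine hsum.congr_deriv ?_
      rw [Real.cos_two_mul (2*π*t/L), hC₁, hC₂, hf]
      ring_nf
      simp only [Real.sin_sq]
      field_simp
      ring
    have hcont : ContinuousOn (fun t =>
        (c₂₃ * ((c₁₃ * k * L) / (2 * c₂₃ * π) * (Real.sin (2*π*t/L) * (2*π/L)))^2
          + c₁₂ * (-(Real.cos (2*π*t/L) * (2*π/L)))^2)
          - c₁₃ * k * (((c₁₃ * k * L) / (2 * c₂₃ * π) * (1 - Real.cos (2*π*t/L)))
              * (-(Real.cos (2*π*t/L) * (2*π/L)))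
            - ((c₁₃ * k * L) / (2 * c₂₃ * π) * (Real.sin (2*π*t/L) * (2*π/L)))
              * (-Real.sin (2*π*t/L)))
          + fcrit * (-Real.sin (2*π*t/L))^2) (uIcc 0 L) := by
      apply Continuous.continuousOn
      fun_prop
    have := integral_eq_sub_of_hasDerivAt (fun t _ => hΦ t) hcont.intervalIntegrable
    rw [this]
    have e2π : 2*π*L/L = 2*π := by field_simp
    have hsin4 : Real.sin (2*(2*π)) = 0 := by
      rw [show (2:ℝ)*(2*π) = 2*π + 2*π by ring, Real.sin_add, Real.sin_two_pi,
        Real.cos_two_pi]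
      ring
    simp [e2π, Real.sin_two_pi, hsin4]
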